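/- For all real p, q and complex u, v: ∑_{m,n=0}^∞ (u^m/m!)(v^n/n!) · (2π)^{-1/2} ∫_ℝ e^{iyq} h_m(y+p/2) h_n(y-p/2) dy = 2^{-1/2} e^{-(p²+q²)/4} exp(2uv + (p+iq)u - (p-iq)v). -/

import Mathlib

open MeasureTheory Complex Real

noncomputable def Hphys (n : ℕ) (x : ℝ) : ℝ :=
  (-1 : ℝ)^n * Real.exp (x^2) * iteratedDeriv n (fun t : ℝ => Real.exp (-t^2)) x

noncomputable def hFun (n : ℕ) (x : ℝ) : ℝ := Real.exp (-x^2/2) * Hphys n x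

noncomputable def fc : ℂ → ℂ := fun z => Complex.exp (-z^2)

lemma fc_diff : Differentiable ℂ fc := by
  apply Complex.differentiable_exp.comp
  fun_prop

lemma iteratedDeriv_fc_diff (n : ℕ) : Differentiable ℂ (iteratedDeriv n fc) :=
  (fc_diff.contDiff (n := (n+1 : ℕ))).differentiable_iteratedDeriv n
    (by exact_mod_cast Nat.lt_succ_self n)

lemma transfer (n : ℕ) (x : ℝ) :
    (↑(iteratedDeriv n (fun t : ℝ => Real.exp (-t^2)) x) : ℂ) = iteratedDeriv n fc x := by
  induction n generalizing x with
  | zero =>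
    simp only [iteratedDeriv_zero, fc]
    rw [Complex.ofReal_exp]
    norm_cast
  | succ n ih =>
    have hd1 : HasDerivAt (fun y : ℝ => iteratedDeriv n fc ↑y)
        (iteratedDeriv (n+1) fc ↑x) x := by
      have := ((iteratedDeriv_fc_diff n) (x : ℂ)).hasDerivAt
      rw [← iteratedDeriv_succ] at *
      exact this.comp_ofReal
    have heq : (fun y : ℝ => iteratedDeriv n fc ↑y)
        = fun y : ℝ => (↑(iteratedDeriv n (fun t : ℝ => Real.exp (-t^2)) y) : ℂ) := by
      ext y; rw [ih]
    rw [heq] at hd1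
    have hd2 : HasDerivAt (iteratedDeriv n (fun t : ℝ => Real.exp (-t^2)))
        ((iteratedDeriv (n+1) fc ↑x).re) x := by
      have := (Complex.reCLM.hasFDerivAt (x := ((iteratedDeriv n (fun t : ℝ => Real.exp (-t^2)) x : ℝ) : ℂ))).comp_hasDerivAt x hd1
      exact this.congr_of_eventuallyEq (Filter.Eventually.of_forall (fun y => by simp))
    have hd3 := hd2.ofReal_comp
    have := hd1.unique hd3
    rw [iteratedDeriv_succ, hd2.deriv, this]
    simp

lemma hFun_ofReal (n : ℕ) (x : ℝ) :
    (hFun n x : ℂ) = (-1:ℂ)^n * Complex.exp ((x:ℂ)^2/2) * iteratedDeriv n fc ↑x := by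
  simp only [hFun, Hphys, Complex.ofReal_mul, Complex.ofReal_pow, Complex.ofReal_neg,
    Complex.ofReal_one, Complex.ofReal_exp, Complex.ofReal_div, Complex.ofReal_ofNat, transfer]
  have h1 : Complex.exp (-(x:ℂ)^2/2) * Complex.exp ((x:ℂ)^2) = Complex.exp ((x:ℂ)^2/2) := by
    rw [← Complex.exp_add]; congr 1; ring
  linear_combination ((-1:ℂ)^n * iteratedDeriv n fc ↑x) * h1

-- generating function
lemma gen_hasSum (x : ℝ) (t : ℂ) :
    HasSum (fun n : ℕ => t^n / (Nat.factorial n : ℂ) * (hFun n x : ℂ))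
      (Complex.exp (-(x:ℂ)^2/2 + 2*x*t - t^2)) := by
  have H := Complex.hasSum_taylorSeries_of_entire fc_diff (x : ℂ) ((x : ℂ) - t)
  have H2 := H.mul_left (Complex.exp ((x:ℂ)^2/2))
  have : ∀ n : ℕ, Complex.exp ((x:ℂ)^2/2) * ((Nat.factorial n : ℂ)⁻¹ • ((x:ℂ) - t - x) ^ n • iteratedDeriv n fc ↑x)
      = t^n / (Nat.factorial n : ℂ) * (hFun n x : ℂ) := by
    intro n
    rw [hFun_ofReal]
    simp only [smul_eq_mul]
    rw [show ((x:ℂ) - t - x) = -t by ring]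
    rw [neg_pow]
    ring_nf
  rw [funext this] at H2
  rw [show (-(x:ℂ)^2/2 + 2*x*t - t^2) = (x:ℂ)^2/2 + -((x:ℂ)-t)^2 by ring, Complex.exp_add]
  exact H2

lemma norm_fc_circle (x : ℝ) (R : ℝ) (hR : 0 ≤ R) (θ : ℝ) :
    ‖fc (circleMap (↑x) R θ)‖ ≤ Real.exp (-x^2 + 2*|x| * R + R^2) := by
  have hre : (-(circleMap (↑x) R θ)^2).re
      = -(x + R * Real.cos θ)^2 + (R * Real.sin θ)^2 := by
    simp [circleMap, Complex.exp_ofReal_mul_I_re, Complex.exp_ofReal_mul_I_im,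
      Complex.add_re, Complex.add_im, pow_two, Complex.mul_re, Complex.mul_im]
    ring
  have : ‖fc (circleMap (↑x) R θ)‖ = Real.exp ((-(circleMap (↑x) R θ)^2).re) := by
    simp [fc, Complex.norm_exp]
  rw [this, hre]
  apply Real.exp_le_exp.2
  have h2 : |x * Real.cos θ| ≤ |x| := by
    rw [abs_mul]
    exact mul_le_of_le_one_right (abs_nonneg x) (Real.abs_cos_le_one θ)
  have h3 := Real.sin_sq_add_cos_sq θ
  have h4 := abs_le.1 h2
  nlinarith [sq_nonneg (R * Real.cos θ), abs_nonneg x, mul_le_mul_of_nonneg_left h4.1 hR,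
    mul_le_mul_of_nonneg_left h4.2 hR]

lemma iter_bound (R : NNReal) (hR : 0 < R) (n : ℕ) (x : ℝ) :
    ‖iteratedDeriv n fc ↑x‖
      ≤ (Nat.factorial n : ℝ) * ((R:ℝ)⁻¹)^n * Real.exp (-x^2 + 2*|x| * R + R^2) := by
  have h := fc_diff.hasFPowerSeriesOnBall (↑x : ℂ) hR
  set p := cauchyPowerSeries fc ↑x R with hp
  have hfs := h.factorial_smul (1:ℂ) n
  have hid : iteratedDeriv n fc ↑x = iteratedFDeriv ℂ n fc ↑x (fun _ => 1) := by
    rw [iteratedDeriv_eq_iteratedFDeriv]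
  rw [hid, ← hfs]
  have h1 : ‖(Nat.factorial n) • p n (fun _ => (1:ℂ))‖
      = (Nat.factorial n : ℝ) * ‖p n (fun _ => (1:ℂ))‖ := by
    rw [← Nat.cast_smul_eq_nsmul ℝ, norm_smul]
    simp
  rw [h1]
  have h2 : ‖p n (fun _ => (1:ℂ))‖ ≤ ‖p n‖ := by
    have := (p n).le_opNorm (fun _ => (1:ℂ))
    simpa using this
  have h3 := norm_cauchyPowerSeries_le fc (↑x) R n
  set M := Real.exp (-x^2 + 2*|x| * R + R^2) with hM
  have h4 : (∫ θ : ℝ in (0)..2 * Real.pi, ‖fc (circleMap (↑x) R θ)‖) ≤ 2 * Real.pi * M := by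
    have : (2:ℝ) * Real.pi * M = ∫ θ : ℝ in (0)..2 * Real.pi, M := by
      simp [mul_comm]
    rw [this]
    apply intervalIntegral.integral_mono_on Real.two_pi_pos.le
    · apply Continuous.intervalIntegrable
      exact (fc_diff.continuous.comp (continuous_circleMap _ _)).norm
    · exact intervalIntegrable_const
    · intro θ _
      exact norm_fc_circle x R R.coe_nonneg θ
  have h5 : ‖p n‖ ≤ M * ((R:ℝ)⁻¹)^n := by
    refine h3.trans ?_
    have habs : |(R:ℝ)| = (R:ℝ) := abs_of_nonneg R.coe_nonneg
    rw [habs]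
    have hcoef : (2 * Real.pi)⁻¹ * (∫ θ : ℝ in (0)..2 * Real.pi, ‖fc (circleMap (↑x) R θ)‖) ≤ M := by
      calc (2 * Real.pi)⁻¹ * ∫ θ : ℝ in (0)..2 * Real.pi, ‖fc (circleMap (↑x) R θ)‖
          ≤ (2 * Real.pi)⁻¹ * (2 * Real.pi * M) := by
            apply mul_le_mul_of_nonneg_left h4 (by positivity)
        _ = M := by field_simp
    exact mul_le_mul_of_nonneg_right hcoef (by positivity)
  calc (Nat.factorial n : ℝ) * ‖p n (fun _ => (1:ℂ))‖
      ≤ (Nat.factorial n : ℝ) * (M * ((R:ℝ)⁻¹)^n) := by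
        gcongr
        exact h2.trans h5
    _ = (Nat.factorial n : ℝ) * ((R:ℝ)⁻¹)^n * M := by ring

lemma hFun_abs_eq (n : ℕ) (x : ℝ) :
    |hFun n x| = Real.exp (x^2/2) * ‖iteratedDeriv n fc ↑x‖ := by
  have : ‖iteratedDeriv n fc ↑x‖ = |iteratedDeriv n (fun t : ℝ => Real.exp (-t^2)) x| := by
    rw [← transfer]
    simp [Complex.norm_real, Real.norm_eq_abs]
  rw [this]
  simp only [hFun, Hphys, abs_mul, abs_pow, abs_neg, abs_one, one_pow, one_mul,
    Real.abs_exp]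
  have h2 : |(-1:ℝ)^n| = 1 := by rw [_root_.abs_pow]; simp
  have h3 : Real.exp (-x^2/2) * (1 * Real.exp (x^2)) = Real.exp (x^2/2) := by
    rw [one_mul, ← Real.exp_add]; ring_nf
  rw [← h3]; ring

lemma hFun_bound (R : NNReal) (hR : 0 < R) (n : ℕ) (x : ℝ) :
    |hFun n x| ≤ (Nat.factorial n : ℝ) * ((R:ℝ)⁻¹)^n * Real.exp (5*(R:ℝ)^2)
      * Real.exp (-x^2/4) := by
  rw [hFun_abs_eq]
  calc Real.exp (x^2/2) * ‖iteratedDeriv n fc ↑x‖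
      ≤ Real.exp (x^2/2) *
        ((Nat.factorial n : ℝ) * ((R:ℝ)⁻¹)^n * Real.exp (-x^2 + 2*|x| * R + R^2)) :=
        mul_le_mul_of_nonneg_left (iter_bound R hR n x) (Real.exp_nonneg _)
    _ = (Nat.factorial n : ℝ) * ((R:ℝ)⁻¹)^n * Real.exp (-x^2/2 + 2*|x| * R + R^2) := by
        rw [show Real.exp (x^2/2) * ((Nat.factorial n : ℝ) * ((R:ℝ)⁻¹)^n * Real.exp (-x^2 + 2*|x| * R + R^2)) = (Nat.factorial n : ℝ) * ((R:ℝ)⁻¹)^n * (Real.exp (x^2/2) * Real.exp (-x^2 + 2*|x| * R + R^2)) from by ring, ← Real.exp_add]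
        congr 2
        ring
    _ ≤ (Nat.factorial n : ℝ) * ((R:ℝ)⁻¹)^n * (Real.exp (5*(R:ℝ)^2) * Real.exp (-x^2/4)) := by
        rw [← Real.exp_add]
        apply mul_le_mul_of_nonneg_left _ (by positivity)
        apply Real.exp_le_exp.2
        nlinarith [sq_nonneg (|x| - 4*(R:ℝ)), _root_.sq_abs x]
    _ = _ := by ring

lemma hFun_cont (n : ℕ) : Continuous (hFun n) := by
  have h1 : Continuous (fun x : ℝ => iteratedDeriv n (fun t : ℝ => Real.exp (-t^2)) x) := by
    have : (fun x : ℝ => iteratedDeriv n (fun t : ℝ => Real.exp (-t^2)) x)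
        = fun x : ℝ => (iteratedDeriv n fc ↑x).re := by
      ext x; rw [← transfer]; simp
    rw [this]
    exact Complex.continuous_re.comp
      ((iteratedDeriv_fc_diff n).continuous.comp Complex.continuous_ofReal)
  unfold hFun Hphys
  fun_prop

lemma gen_norm_le (x : ℝ) (t : ℂ) :
    ‖Complex.exp (-(x:ℂ)^2/2 + 2*x*t - t^2)‖
      ≤ Real.exp (5*(‖t‖)^2) * Real.exp (-x^2/4) := by
  rw [Complex.norm_exp, ← Real.exp_add]
  apply Real.exp_le_exp.2
  have hre : (-(x:ℂ)^2/2 + 2*x*t - t^2).re = -x^2/2 + 2*x*t.re - (t.re^2 - t.im^2) := by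
    simp [Complex.sub_re, Complex.add_re, Complex.div_re, Complex.mul_re, pow_two,
      Complex.normSq_apply]
    try ring
  rw [hre]
  have h2 : x * t.re ≤ |x| * ‖t‖ := by
    calc x * t.re ≤ |x * t.re| := le_abs_self _
      _ = |x| * |t.re| := abs_mul _ _
      _ ≤ |x| * ‖t‖ := by
          apply mul_le_mul_of_nonneg_left (Complex.abs_re_le_norm t) (abs_nonneg x)
  have h3 : (‖t‖)^2 = t.re^2 + t.im^2 := by
    rw [Complex.sq_norm, Complex.normSq_apply]; ring
  nlinarith [sq_nonneg (|x| - 4*‖t‖), _root_.sq_abs x]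

lemma integrable_g : Integrable (fun y : ℝ => Real.exp (-y^2/2)) := by
  have := integrable_exp_neg_mul_sq (by norm_num : (0:ℝ) < 1/2)
  convert this using 2 with y
  ring

lemma integrable_of_bound {φ : ℝ → ℂ} (hc : Continuous φ) (c : ℝ)
    (h : ∀ y, ‖φ y‖ ≤ c * Real.exp (-y^2/2)) : Integrable φ := by
  apply Integrable.mono (integrable_g.const_mul c) hc.aestronglyMeasurable
  filter_upwards with y
  exact (h y).trans (le_abs_self _)

lemma tsum_integral_swap (F : ℕ → ℝ → ℂ) (hcont : ∀ n, Continuous (F n))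
    (b : ℕ → ℝ) (hb : ∀ n y, ‖F n y‖ ≤ b n * Real.exp (-y^2/2))
    (hbs : Summable b) :
    ∑' n, ∫ y, F n y = ∫ y, ∑' n, F n y := by
  have hint : ∀ n, Integrable (F n) := fun n => integrable_of_bound (hcont n) (b n) (hb n)
  apply integral_tsum_of_summable_integral_norm hint
  apply Summable.of_nonneg_of_le (fun n => integral_nonneg fun y => norm_nonneg _)
    (fun n => ?_) (hbs.mul_right (∫ y : ℝ, Real.exp (-y^2/2)))
  calc (∫ y : ℝ, ‖F n y‖) ≤ ∫ y : ℝ, b n * Real.exp (-y^2/2) :=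
        integral_mono (hint n).norm (integrable_g.const_mul (b n)) (hb n)
    _ = b n * ∫ y : ℝ, Real.exp (-y^2/2) := integral_const_mul _ _
    _ = _ := rfl

lemma norm_phase (y q : ℝ) : ‖Complex.exp (Complex.I*y*q)‖ = 1 := by
  rw [Complex.norm_exp]
  simp [Complex.mul_re]

lemma comb (a y : ℝ) :
    Real.exp (-(y+a)^2/4) * Real.exp (-(y-a)^2/4)
      = Real.exp (-(2*a^2)/4) * Real.exp (-y^2/2) := by
  rw [← Real.exp_add, ← Real.exp_add]
  congr 1
  ring

lemma norm_coeff (w : ℂ) (n : ℕ) : ‖(w^n/(Nat.factorial n : ℂ))‖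
    = ‖w‖ ^ n / (Nat.factorial n : ℝ) := by
  simp [norm_div, norm_pow, Complex.norm_natCast]

lemma master_bound (S : NNReal) (hS : 0 < S) (n : ℕ) (x : ℝ) (w : ℂ) :
    ‖(w^n/(Nat.factorial n : ℂ))‖ * |hFun n x|
      ≤ (‖w‖ * ((S:ℝ))⁻¹)^n * Real.exp (5*(S:ℝ)^2) * Real.exp (-x^2/4) := by
  rw [norm_coeff]
  have h := hFun_bound S hS n x
  have hf : ((Nat.factorial n : ℝ)) ≠ 0 := by positivity
  calc ‖w‖ ^ n / (Nat.factorial n : ℝ) * |hFun n x|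
      ≤ ‖w‖ ^ n / (Nat.factorial n : ℝ) *
        ((Nat.factorial n : ℝ) * ((S:ℝ)⁻¹)^n * Real.exp (5*(S:ℝ)^2) * Real.exp (-x^2/4)) :=
        mul_le_mul_of_nonneg_left h (by positivity)
    _ = (‖w‖ * ((S:ℝ))⁻¹)^n * Real.exp (5*(S:ℝ)^2) * Real.exp (-x^2/4) := by
        rw [mul_pow]
        field_simp

lemma ratio_lt_one (a : ℝ) (ha : 0 ≤ a) : a * ((2*a+1 : ℝ).toNNReal : ℝ)⁻¹ < 1 := by
  rw [Real.coe_toNNReal _ (by positivity)]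
  rw [mul_inv_lt_iff₀ (by positivity)]
  linarith

theorem FW_hermite_generating (p q : ℝ) (u v : ℂ) :
    ∑' (m : ℕ) (n : ℕ),
        u^m / (Nat.factorial m : ℂ) * (v^n / (Nat.factorial n : ℂ)) *
          (((2 * Real.pi) ^ (-(1:ℝ)/2) : ℝ) *
            ∫ y : ℝ, Complex.exp (Complex.I * y * q) * (hFun m (y + p/2) : ℂ) * (hFun n (y - p/2) : ℂ))
      = (((2 : ℝ) ^ (-(1:ℝ)/2) : ℝ) : ℂ) * Complex.exp (-((p : ℂ)^2 + (q : ℂ)^2) / 4)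
          * Complex.exp (2 * u * v + ((p : ℂ) + Complex.I * q) * u - ((p : ℂ) - Complex.I * q) * v) := by
  set C : ℝ := (2 * Real.pi) ^ (-(1:ℝ)/2) with hC
  set au := ‖u‖ with hau
  set av := ‖v‖ with hav
  set Sv : NNReal := (2*av+1).toNNReal with hSv
  set Ru : NNReal := (2*au+1).toNNReal with hRu
  have hSvpos : 0 < Sv := Real.toNNReal_pos.2 (by positivity)
  have hRupos : 0 < Ru := Real.toNNReal_pos.2 (by positivity)
  set B : ℝ → ℂ := fun y =>
    Complex.exp (-((y - p/2 : ℝ):ℂ)^2/2 + 2*((y - p/2 : ℝ):ℂ)*v - v^2) with hB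
  set A : ℝ → ℂ := fun y =>
    Complex.exp (-((y + p/2 : ℝ):ℂ)^2/2 + 2*((y + p/2 : ℝ):ℂ)*u - u^2) with hA
  set F : ℕ → ℝ → ℂ := fun m y =>
    u^m/(Nat.factorial m : ℂ) * (Complex.exp (Complex.I*y*q) * (hFun m (y+p/2):ℂ)) * B y
    with hF
  have contB : Continuous B := by
    apply Complex.continuous_exp.comp
    fun_prop
  have contphase : Continuous (fun y : ℝ => Complex.exp (Complex.I*y*q)) := by
    apply Complex.continuous_exp.comp; fun_prop
  have conthc : ∀ (n : ℕ) (a : ℝ), Continuous (fun y : ℝ => ((hFun n (y+a) : ℝ) : ℂ)) := by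
    intro n a
    exact Complex.continuous_ofReal.comp ((hFun_cont n).comp (by fun_prop))
  have conthc' : ∀ (n : ℕ), Continuous (fun y : ℝ => ((hFun n (y-p/2) : ℝ) : ℂ)) := by
    intro n
    exact Complex.continuous_ofReal.comp ((hFun_cont n).comp (by fun_prop))
  -- inner stage
  have hinner : ∀ m : ℕ,
      (∑' n : ℕ, u^m / (Nat.factorial m : ℂ) * (v^n / (Nat.factorial n : ℂ)) *
        ((C : ℂ) * ∫ y : ℝ, Complex.exp (Complex.I * y * q) * (hFun m (y + p/2) : ℂ)
            * (hFun n (y - p/2) : ℂ)))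
      = (C : ℂ) * ∫ y : ℝ, F m y := by
    intro m
    set G : ℕ → ℝ → ℂ := fun n y => (u^m/(Nat.factorial m : ℂ) * (v^n/(Nat.factorial n : ℂ))) *
      (Complex.exp (Complex.I*y*q) * (hFun m (y+p/2):ℂ) * (hFun n (y-p/2):ℂ)) with hG
    have hterm : ∀ n : ℕ, u^m / (Nat.factorial m : ℂ) * (v^n / (Nat.factorial n : ℂ)) *
        ((C : ℂ) * ∫ y : ℝ, Complex.exp (Complex.I * y * q) * (hFun m (y + p/2) : ℂ)
            * (hFun n (y - p/2) : ℂ))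
        = (C : ℂ) * ∫ y : ℝ, G n y := by
      intro n
      simp only [hG]
      rw [integral_const_mul]
      ring
    rw [tsum_congr hterm, tsum_mul_left]
    congr 1
    set Am : ℝ := (au * ((1:NNReal):ℝ)⁻¹)^m * Real.exp (5*((1:NNReal):ℝ)^2)
      * Real.exp (5*(Sv:ℝ)^2) * Real.exp (-(2*(p/2)^2)/4) with hAm
    have hswap := tsum_integral_swap G
      (fun n => by
        apply Continuous.mul continuous_const
        exact (contphase.mul (conthc m (p/2))).mul (conthc' n))
      (fun n => (av * ((Sv:ℝ))⁻¹)^n * Am)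
      (fun n y => by
        have e1 : ‖G n y‖ = (‖(u^m/(Nat.factorial m : ℂ))‖ * |hFun m (y+p/2)|)
            * (‖(v^n/(Nat.factorial n : ℂ))‖ * |hFun n (y-p/2)|) := by
          simp only [hG, norm_mul, norm_phase, Complex.norm_real, Real.norm_eq_abs]
          ring
        rw [e1]
        calc (‖(u^m/(Nat.factorial m : ℂ))‖ * |hFun m (y+p/2)|)
            * (‖(v^n/(Nat.factorial n : ℂ))‖ * |hFun n (y-p/2)|)
            ≤ ((au * ((1:NNReal):ℝ)⁻¹)^m * Real.exp (5*((1:NNReal):ℝ)^2)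
                * Real.exp (-(y+p/2)^2/4))
              * ((av * ((Sv:ℝ))⁻¹)^n * Real.exp (5*(Sv:ℝ)^2) * Real.exp (-(y-p/2)^2/4)) :=
              mul_le_mul (master_bound 1 one_pos m (y+p/2) u)
                (master_bound Sv hSvpos n (y-p/2) v)
                (by positivity) (by positivity)
          _ = ((au * ((1:NNReal):ℝ)⁻¹)^m * Real.exp (5*((1:NNReal):ℝ)^2)
                * ((av * ((Sv:ℝ))⁻¹)^n * Real.exp (5*(Sv:ℝ)^2)))
              * (Real.exp (-(y+p/2)^2/4) * Real.exp (-(y-p/2)^2/4)) := by ring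
          _ = ((au * ((1:NNReal):ℝ)⁻¹)^m * Real.exp (5*((1:NNReal):ℝ)^2)
                * ((av * ((Sv:ℝ))⁻¹)^n * Real.exp (5*(Sv:ℝ)^2)))
              * (Real.exp (-(2*(p/2)^2)/4) * Real.exp (-y^2/2)) := by rw [comb (p/2) y]
          _ = (av * ((Sv:ℝ))⁻¹)^n * Am * Real.exp (-y^2/2) := by rw [hAm]; ring)
      (by
        apply Summable.mul_right
        apply summable_geometric_of_lt_one (by positivity)
        exact ratio_lt_one av (norm_nonneg v))
    rw [hswap]
    congr 1
    funext y
    have hs := (gen_hasSum (y - p/2) v).mul_left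
      (u^m/(Nat.factorial m:ℂ) * (Complex.exp (Complex.I*y*q) * (hFun m (y+p/2):ℂ)))
    have he : (fun n : ℕ => u^m/(Nat.factorial m:ℂ)
          * (Complex.exp (Complex.I*y*q) * ((hFun m (y+p/2):ℝ):ℂ))
          * (v^n/(Nat.factorial n:ℂ) * ((hFun n (y-p/2):ℝ):ℂ)))
        = fun n => G n y := by
      funext n; simp only [hG]; ring
    have hs2 : HasSum (fun n => G n y) (F m y) := by
      rw [← he]
      exact hs
    exact hs2.tsum_eq
  rw [tsum_congr hinner, tsum_mul_left]
  -- outer stage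
  set A2 : ℝ := Real.exp (5*(Ru:ℝ)^2) * Real.exp (5*av^2) * Real.exp (-(2*(p/2)^2)/4) with hA2
  have hswap2 := tsum_integral_swap F
    (fun m => (Continuous.mul continuous_const (contphase.mul (conthc m (p/2)))).mul contB)
    (fun m => (au * ((Ru:ℝ))⁻¹)^m * A2)
    (fun m y => by
      have e2 : ‖F m y‖ = (‖(u^m/(Nat.factorial m : ℂ))‖ * |hFun m (y+p/2)|) * ‖B y‖ := by
        simp only [hF, norm_mul, norm_phase, Complex.norm_real, Real.norm_eq_abs]
        ring
      rw [e2]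
      calc (‖(u^m/(Nat.factorial m : ℂ))‖ * |hFun m (y+p/2)|) * ‖B y‖
          ≤ ((au * ((Ru:ℝ))⁻¹)^m * Real.exp (5*(Ru:ℝ)^2) * Real.exp (-(y+p/2)^2/4))
            * (Real.exp (5*av^2) * Real.exp (-(y-p/2)^2/4)) :=
            mul_le_mul (master_bound Ru hRupos m (y+p/2) u)
              (gen_norm_le (y-p/2) v) (by positivity) (by positivity)
        _ = ((au * ((Ru:ℝ))⁻¹)^m * Real.exp (5*(Ru:ℝ)^2) * Real.exp (5*av^2))
            * (Real.exp (-(y+p/2)^2/4) * Real.exp (-(y-p/2)^2/4)) := by ring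
        _ = ((au * ((Ru:ℝ))⁻¹)^m * Real.exp (5*(Ru:ℝ)^2) * Real.exp (5*av^2))
            * (Real.exp (-(2*(p/2)^2)/4) * Real.exp (-y^2/2)) := by rw [comb (p/2) y]
        _ = (au * ((Ru:ℝ))⁻¹)^m * A2 * Real.exp (-y^2/2) := by rw [hA2]; ring)
    (by
      apply Summable.mul_right
      apply summable_geometric_of_lt_one (by positivity)
      exact ratio_lt_one au (norm_nonneg u))
  rw [hswap2]
  have houter : ∀ y : ℝ, (∑' m : ℕ, F m y)
      = Complex.exp ((-1:ℂ)*(y:ℂ)^2 + (Complex.I*q + 2*u + 2*v)*(y:ℂ)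
          + (-(p:ℂ)^2/4 + p*u - p*v - u^2 - v^2)) := by
    intro y
    have hs := (gen_hasSum (y + p/2) u).mul_right (Complex.exp (Complex.I*y*q) * B y)
    have he : (fun m : ℕ => u^m/(Nat.factorial m:ℂ) * ((hFun m (y+p/2):ℝ):ℂ)
          * (Complex.exp (Complex.I*y*q) * B y))
        = fun m => F m y := by
      funext m; simp only [hF]; ring
    have hs2 : HasSum (fun m => F m y)
        (Complex.exp (-((y + p/2 : ℝ):ℂ)^2/2 + 2*((y + p/2 : ℝ):ℂ)*u - u^2)
          * (Complex.exp (Complex.I*y*q) * B y)) := by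
      rw [← he]
      exact hs
    rw [hs2.tsum_eq, hB]
    simp only []
    rw [show Complex.exp (-((y - p/2 : ℝ):ℂ)^2/2 + 2*((y - p/2 : ℝ):ℂ)*v - v^2)
        = Complex.exp (-((y:ℂ) - (p:ℂ)/2)^2/2 + 2*((y:ℂ) - (p:ℂ)/2)*v - v^2) by push_cast; ring_nf]
    rw [show Complex.exp (-((y + p/2 : ℝ):ℂ)^2/2 + 2*((y + p/2 : ℝ):ℂ)*u - u^2)
        = Complex.exp (-((y:ℂ) + (p:ℂ)/2)^2/2 + 2*((y:ℂ) + (p:ℂ)/2)*u - u^2) by push_cast; ring_nf]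
    rw [← Complex.exp_add, ← Complex.exp_add]
    congr 1
    ring
  have hintC : (∫ y : ℝ, (∑' m : ℕ, F m y))
      = ∫ y : ℝ, Complex.exp ((-1:ℂ)*(y:ℂ)^2 + (Complex.I*q + 2*u + 2*v)*(y:ℂ)
          + (-(p:ℂ)^2/4 + p*u - p*v - u^2 - v^2)) := by
    apply integral_congr_ae
    filter_upwards with y
    exact houter y
  rw [hintC, integral_cexp_quadratic (by norm_num : (-1:ℂ).re < 0)]
  rw [show (-(-1:ℂ)) = 1 by norm_num, div_one]
  have hpi : ((Real.pi : ℂ)) ^ (1/2 : ℂ) = ((Real.pi ^ ((1:ℝ)/2) : ℝ) : ℂ) := by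
    rw [Complex.ofReal_cpow Real.pi_pos.le]
    norm_num
  have hCreal : C * Real.pi ^ ((1:ℝ)/2) = (2:ℝ) ^ (-(1:ℝ)/2) := by
    rw [hC, Real.mul_rpow (by norm_num) Real.pi_pos.le]
    rw [mul_assoc, ← Real.rpow_add Real.pi_pos]
    norm_num
  have hexp : Complex.exp ((-(p:ℂ)^2/4 + p*u - p*v - u^2 - v^2)
        - (Complex.I*q + 2*u + 2*v)^2/(4*(-1:ℂ)))
      = Complex.exp (-((p : ℂ)^2 + (q : ℂ)^2) / 4)
        * Complex.exp (2*u*v + ((p:ℂ) + Complex.I*q)*u - ((p:ℂ) - Complex.I*q)*v) := by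
    rw [← Complex.exp_add]
    congr 1
    have hI : (Complex.I)^2 = -1 := Complex.I_sq
    linear_combination ((q:ℂ)^2/4) * hI
  rw [hpi, ← mul_assoc, ← Complex.ofReal_mul, hCreal, hexp]
  ring
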